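/- For every real constant C, there exists a probability density function f on ℝ with differential entropy h(f) = 0 such that if X and X' are independent random variables each with density f, then h(X+X') > C. (Such f may be taken to be the uniform density on a union of intervals ⋃_{n∈ℕ} (2^n, 2^n + a_n) with a_n ≥ 0 and ∑ a_n = 1, for a suitable choice of the a_n.) -/

import Mathlib

open MeasureTheory ProbabilityTheory

noncomputable section StmtAux

/-- Interval `(2^i, 2^i + 1/N)`. -/
def stmt13Iv (N i : ℕ) : Set ℝ := Set.Ioo ((2:ℝ)^i) ((2:ℝ)^i + 1/N)

/-- The support set `⋃_{i<N} (2^i, 2^i + 1/N)`. -/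
def stmt13S (N : ℕ) : Set ℝ := ⋃ i ∈ Finset.range N, stmt13Iv N i

lemma stmt13Iv_meas (N i : ℕ) : MeasurableSet (stmt13Iv N i) := measurableSet_Ioo

lemma stmt13S_meas (N : ℕ) : MeasurableSet (stmt13S N) :=
  Finset.measurableSet_biUnion _ fun i _ => stmt13Iv_meas N i

lemma stmt13Iv_vol (N i : ℕ) : volume (stmt13Iv N i) = ENNReal.ofReal (1/N) := by
  simp [stmt13Iv, Real.volume_Ioo]

lemma stmt13Iv_subset (N : ℕ) (hN : 1 ≤ N) {i : ℕ} (hi : i < N) :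
    stmt13Iv N i ⊆ Set.Ioo 0 ((2:ℝ)^N) := by
  intro x hx
  obtain ⟨h1, h2⟩ := hx
  have h2i : (1:ℝ) ≤ 2^i := one_le_pow₀ one_le_two
  have hεle : (1:ℝ)/N ≤ 1 := by
    rw [div_le_one (by exact_mod_cast hN)]
    exact_mod_cast hN
  constructor
  · linarith
  · have : (2:ℝ)^i + 1/N ≤ 2^i + 2^i := by linarith
    have h2 : x < 2^i + 2^i := lt_of_lt_of_le h2 this
    have : (2:ℝ)^i + 2^i = 2^(i+1) := by ring
    rw [this] at h2
    exact lt_of_lt_of_le h2 (pow_le_pow_right₀ one_le_two hi)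

lemma stmt13Iv_disj (N : ℕ) (hN : 1 ≤ N) {i j : ℕ} (hij : i ≠ j) :
    Disjoint (stmt13Iv N i) (stmt13Iv N j) := by
  have key : ∀ i j : ℕ, i < j → Disjoint (stmt13Iv N i) (stmt13Iv N j) := by
    intro i j hlt
    rw [Set.disjoint_left]
    rintro x ⟨_, h2⟩ ⟨h3, _⟩
    have h2i : (1:ℝ) ≤ 2^i := one_le_pow₀ one_le_two
    have hεle : (1:ℝ)/N ≤ 1 := by
      rw [div_le_one (by exact_mod_cast hN)]
      exact_mod_cast hN
    have : (2:ℝ)^(i+1) ≤ 2^j := pow_le_pow_right₀ one_le_two hlt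
    have h21 : (2:ℝ)^(i+1) = 2^i + 2^i := by ring
    linarith
  rcases hij.lt_or_gt with h | h
  · exact key _ _ h
  · exact (key _ _ h).symm

lemma stmt13S_vol (N : ℕ) (hN : 1 ≤ N) : volume (stmt13S N) = 1 := by
  rw [stmt13S, measure_biUnion_finset ?_ (fun i _ => stmt13Iv_meas N i)]
  · simp only [stmt13Iv_vol, Finset.sum_const, Finset.card_range, nsmul_eq_mul]
    rw [← ENNReal.ofReal_natCast, ← ENNReal.ofReal_mul (by positivity)]
    rw [mul_one_div, div_self (by exact_mod_cast hN.trans_lt' Nat.zero_lt_one |>.ne' ), ENNReal.ofReal_one]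
  · intro i _ j _ hij
    exact stmt13Iv_disj N hN hij

end StmtAux

lemma stmt13_pow_inj {i j k l : ℕ} (hij : i ≤ j) (hkl : k ≤ l)
    (h : 2^i + 2^j = 2^k + 2^l) : i = k ∧ j = l := by
  have hjl : j = l := by
    by_contra hne
    rcases lt_or_gt_of_ne hne with hlt | hlt
    · have h1 := Nat.pow_le_pow_right (by norm_num : 0 < 2) hij
      have h2 : 2^(j+1) ≤ 2^l := Nat.pow_le_pow_right (by norm_num : 0 < 2) hlt
      rw [pow_succ] at h2
      have h3 := Nat.two_pow_pos k
      omega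
    · have h1 := Nat.pow_le_pow_right (by norm_num : 0 < 2) hkl
      have h2 : 2^(l+1) ≤ 2^j := Nat.pow_le_pow_right (by norm_num : 0 < 2) hlt
      rw [pow_succ] at h2
      have h3 := Nat.two_pow_pos i
      omega
  subst hjl
  have hik : (2:ℕ)^i = 2^k := by omega
  exact ⟨Nat.pow_right_injective (le_refl 2) hik, rfl⟩

lemma stmt13_pow_inj' {i j k l : ℕ} (h : 2^i + 2^j = 2^k + 2^l) :
    (i = k ∧ j = l) ∨ (i = l ∧ j = k) := by
  rcases le_total i j with hij | hij <;> rcases le_total k l with hkl | hkl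
  · exact Or.inl (stmt13_pow_inj hij hkl h)
  · obtain ⟨h1, h2⟩ := stmt13_pow_inj hij hkl (by omega)
    exact Or.inr ⟨h1, h2⟩
  · obtain ⟨h1, h2⟩ := stmt13_pow_inj hij hkl (by omega)
    exact Or.inr ⟨h2, h1⟩
  · obtain ⟨h1, h2⟩ := stmt13_pow_inj hij hkl (by omega)
    exact Or.inl ⟨h2, h1⟩

lemma stmt13_conv_meas {φ ψ : ℝ → ENNReal} (hφ : Measurable φ) (hψ : Measurable ψ) :
    Measurable (fun s => ∫⁻ t, φ t * ψ (s - t)) := by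
  apply Measurable.lintegral_prod_right'
    (f := fun p : ℝ × ℝ => φ p.2 * ψ (p.1 - p.2))
  exact (hφ.comp measurable_snd).mul (hψ.comp (measurable_fst.sub measurable_snd))

lemma stmt13_map_add_prod {φ ψ : ℝ → ENNReal} (hφ : Measurable φ) (hψ : Measurable ψ) :
    Measure.map (fun p : ℝ × ℝ => p.1 + p.2)
      ((volume.withDensity φ).prod (volume.withDensity ψ))
    = volume.withDensity (fun s => ∫⁻ t, φ t * ψ (s - t)) := by
  ext A hA
  rw [Measure.map_apply measurable_add hA, withDensity_apply _ hA]
  have hpre : MeasurableSet ((fun p : ℝ × ℝ => p.1 + p.2) ⁻¹' A) :=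
    hA.preimage measurable_add
  rw [← lintegral_indicator_one hpre]
  have hind : Measurable fun p : ℝ × ℝ =>
      ((fun p : ℝ × ℝ => p.1 + p.2) ⁻¹' A).indicator (1 : ℝ × ℝ → ENNReal) p :=
    measurable_one.indicator hpre
  rw [lintegral_prod _ hind.aemeasurable]
  have step1 : ∀ x : ℝ, (∫⁻ y, ((fun p : ℝ × ℝ => p.1 + p.2) ⁻¹' A).indicator 1 (x, y)
      ∂(volume.withDensity ψ)) = ∫⁻ u, ψ (u - x) * A.indicator 1 u := by
    intro x
    have h1 : (∫⁻ y, ((fun p : ℝ × ℝ => p.1 + p.2) ⁻¹' A).indicator 1 (x, y)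
        ∂(volume.withDensity ψ)) = ∫⁻ y, ψ y * A.indicator 1 (x + y) := by
      rw [lintegral_withDensity_eq_lintegral_mul _ hψ
        (show Measurable fun y : ℝ =>
            ((fun p : ℝ × ℝ => p.1 + p.2) ⁻¹' A).indicator 1 (x, y) from
          (measurable_one.indicator hpre).comp measurable_prodMk_left)]
      congr 1 with y
    rw [h1]
    have h2 : ∀ y : ℝ, ψ y * A.indicator 1 (x + y)
        = (fun u => ψ (u - x) * A.indicator 1 u) (x + y) := by
      intro y; simp
    simp_rw [h2]
    exact lintegral_add_left_eq_self (fun u => ψ (u - x) * A.indicator 1 u) x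
  simp_rw [step1]
  rw [lintegral_withDensity_eq_lintegral_mul _ hφ]
  swap
  · apply Measurable.lintegral_prod_right'
      (f := fun p : ℝ × ℝ => ψ (p.2 - p.1) * A.indicator 1 p.2)
    exact (hψ.comp (measurable_snd.sub measurable_fst)).mul
      ((measurable_one.indicator hA).comp measurable_snd)
  have step2 : (fun x => (φ * fun x => ∫⁻ u, ψ (u - x) * A.indicator 1 u) x)
      = fun x => ∫⁻ u, φ x * (ψ (u - x) * A.indicator 1 u) := by
    funext x
    simp only [Pi.mul_apply]
    exact (lintegral_const_mul (φ x)
      ((hψ.comp (measurable_id.sub measurable_const)).mul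
        (measurable_one.indicator hA))).symm
  rw [step2]
  rw [lintegral_lintegral_swap]
  swap
  · apply Measurable.aemeasurable
    apply Measurable.mul (hφ.comp measurable_fst)
    exact (hψ.comp (measurable_snd.sub measurable_fst)).mul
      ((measurable_one.indicator hA).comp measurable_snd)
  have step3 : ∀ u : ℝ, (∫⁻ x, φ x * (ψ (u - x) * A.indicator 1 u))
      = (∫⁻ x, φ x * ψ (u - x)) * A.indicator 1 u := by
    intro u
    simp_rw [← mul_assoc]
    exact lintegral_mul_const _ (hφ.mul (hψ.comp (measurable_const.sub measurable_id)))
  simp_rw [step3]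
  rw [← lintegral_indicator hA]
  congr 1 with u
  by_cases h : u ∈ A <;> simp [Set.indicator_apply, h]

open MeasureTheory

noncomputable section StmtAux2

/-- Self-convolution of the indicator density of `stmt13S N`. -/
def stmt13G (N : ℕ) : ℝ → ENNReal :=
  fun s => ∫⁻ t, (stmt13S N).indicator 1 t * (stmt13S N).indicator 1 (s - t)

lemma stmt13T_meas (N : ℕ) (s : ℝ) :
    MeasurableSet (stmt13S N ∩ {t | s - t ∈ stmt13S N}) :=
  (stmt13S_meas N).inter ((stmt13S_meas N).preimage (measurable_const.sub measurable_id))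

lemma stmt13G_eq (N : ℕ) (s : ℝ) :
    stmt13G N s = volume (stmt13S N ∩ {t | s - t ∈ stmt13S N}) := by
  rw [stmt13G, ← lintegral_indicator_one (stmt13T_meas N s)]
  congr 1 with t
  by_cases h1 : t ∈ stmt13S N <;> by_cases h2 : s - t ∈ stmt13S N <;>
    simp [Set.indicator_apply, h1, h2, Set.mem_inter_iff]

lemma stmt13S_mem {N : ℕ} {x : ℝ} : x ∈ stmt13S N ↔ ∃ i, i < N ∧ x ∈ stmt13Iv N i := by
  simp [stmt13S]

lemma stmt13S_subset (N : ℕ) (hN : 1 ≤ N) : stmt13S N ⊆ Set.Ioo 0 ((2:ℝ)^N) := by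
  intro x hx
  obtain ⟨i, hiN, hxi⟩ := stmt13S_mem.1 hx
  exact stmt13Iv_subset N hN hiN hxi

lemma stmt13_sum_mem {N i j : ℕ} {t u : ℝ} (ht : t ∈ stmt13Iv N i) (hu : u ∈ stmt13Iv N j) :
    ((2^i + 2^j : ℕ) : ℝ) < t + u ∧ t + u < ((2^i + 2^j : ℕ) : ℝ) + 2/N := by
  obtain ⟨ht1, ht2⟩ := ht
  obtain ⟨hu1, hu2⟩ := hu
  have hsum : (1:ℝ)/N + 1/N = 2/N := by ring
  push_cast
  constructor <;> nlinarith

lemma stmt13_overlap {N : ℕ} (hN : 3 ≤ N) {i j k l : ℕ} {s : ℝ}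
    (h1 : ((2^i + 2^j : ℕ) : ℝ) < s ∧ s < ((2^i + 2^j : ℕ) : ℝ) + 2/N)
    (h2 : ((2^k + 2^l : ℕ) : ℝ) < s ∧ s < ((2^k + 2^l : ℕ) : ℝ) + 2/N) :
    2^i + 2^j = 2^k + 2^l := by
  have hN' : (3:ℝ) ≤ N := by exact_mod_cast hN
  have h2N : (2:ℝ)/N ≤ 1 := by
    rw [div_le_one (by linarith)]
    linarith
  have ha : ((2^i + 2^j : ℕ) : ℝ) < ((2^k + 2^l : ℕ) : ℝ) + 1 := by
    obtain ⟨h1a, h1b⟩ := h1; obtain ⟨h2a, h2b⟩ := h2; linarith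
  have hb : ((2^k + 2^l : ℕ) : ℝ) < ((2^i + 2^j : ℕ) : ℝ) + 1 := by
    obtain ⟨h1a, h1b⟩ := h1; obtain ⟨h2a, h2b⟩ := h2; linarith
  have ha' : (2^i + 2^j : ℕ) < (2^k + 2^l : ℕ) + 1 := by exact_mod_cast ha
  have hb' : (2^k + 2^l : ℕ) < (2^i + 2^j : ℕ) + 1 := by exact_mod_cast hb
  omega

lemma stmt13G_le {N : ℕ} (hN : 3 ≤ N) (s : ℝ) : stmt13G N s ≤ ENNReal.ofReal (2/N) := by
  rw [stmt13G_eq]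
  rcases Set.eq_empty_or_nonempty (stmt13S N ∩ {t | s - t ∈ stmt13S N}) with hT | ⟨t₀, ht₀⟩
  · simp [hT]
  · obtain ⟨ht₀S, ht₀'⟩ := ht₀
    obtain ⟨i₀, hi₀N, hti₀⟩ := stmt13S_mem.1 ht₀S
    obtain ⟨j₀, hj₀N, htj₀⟩ := stmt13S_mem.1 ht₀'
    have hs₀ := stmt13_sum_mem hti₀ htj₀
    rw [add_sub_cancel] at hs₀
    have hsub : stmt13S N ∩ {t | s - t ∈ stmt13S N} ⊆ stmt13Iv N i₀ ∪ stmt13Iv N j₀ := by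
      rintro t ⟨htS, ht'⟩
      obtain ⟨k, hkN, htk⟩ := stmt13S_mem.1 htS
      obtain ⟨l, hlN, htl⟩ := stmt13S_mem.1 ht'
      have hs := stmt13_sum_mem htk htl
      rw [add_sub_cancel] at hs
      have heq : 2^k + 2^l = 2^i₀ + 2^j₀ := stmt13_overlap hN hs hs₀
      rcases stmt13_pow_inj' heq with ⟨hk, _⟩ | ⟨hk, _⟩
      · subst hk; exact Or.inl htk
      · subst hk; exact Or.inr htk
    calc volume (stmt13S N ∩ {t | s - t ∈ stmt13S N})
        ≤ volume (stmt13Iv N i₀ ∪ stmt13Iv N j₀) := measure_mono hsub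
      _ ≤ volume (stmt13Iv N i₀) + volume (stmt13Iv N j₀) := measure_union_le _ _
      _ = ENNReal.ofReal (1/N) + ENNReal.ofReal (1/N) := by
          rw [stmt13Iv_vol, stmt13Iv_vol]
      _ = ENNReal.ofReal (2/N) := by
          rw [← ENNReal.ofReal_add (by positivity) (by positivity)]
          norm_num
          ring_nf

lemma stmt13G_support {N : ℕ} (hN : 3 ≤ N) {s : ℝ} (h : stmt13G N s ≠ 0) :
    s ∈ Set.Icc (0:ℝ) (2^(N+1)) := by
  rw [stmt13G_eq] at h
  rcases Set.eq_empty_or_nonempty (stmt13S N ∩ {t | s - t ∈ stmt13S N}) with hT | ⟨t, ht⟩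
  · rw [hT] at h; simp at h
  · obtain ⟨htS, ht'⟩ := ht
    have h1 := stmt13S_subset N (by omega) htS
    have h2 := stmt13S_subset N (by omega) ht'
    obtain ⟨h1a, h1b⟩ := h1
    obtain ⟨h2a, h2b⟩ := h2
    have hpow : (2:ℝ)^(N+1) = 2^N + 2^N := by ring
    constructor <;> [linarith; linarith]

end StmtAux2
open MeasureTheory ProbabilityTheory

/-- The differential entropy `h(μ) = -∫ f log f dx = -∫ log f dμ` of a measure `μ` on `ℝ`
with density `f = dμ/dx` with respect to Lebesgue measure. -/
noncomputable def diffEnt1 (μ : Measure ℝ) : ℝ :=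
  -∫ x, Real.log ((μ.rnDeriv volume x).toReal) ∂μ

/-- For every real constant `C` there is a probability density `f` on `ℝ` with
differential entropy `h(f) = 0` such that whenever `X, X'` are independent random variables
each with density `f`, the sum `X + X'` has finite differential entropy `h(X+X') > C`. -/
theorem stmt13 (C : ℝ) :
    ∃ f : ℝ → ℝ,
      (∀ x, 0 ≤ f x) ∧ Measurable f ∧ (∫ x, f x = 1) ∧
      (-∫ x, f x * Real.log (f x) = 0) ∧
      ∀ (Ω : Type) (_ : MeasureSpace Ω) (_ : IsProbabilityMeasure (ℙ : Measure Ω))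
        (X X' : Ω → ℝ), Measurable X → Measurable X' → IndepFun X X' ℙ →
        Measure.map X ℙ = volume.withDensity (fun x => ENNReal.ofReal (f x)) →
        Measure.map X' ℙ = volume.withDensity (fun x => ENNReal.ofReal (f x)) →
        Integrable
          (fun x => Real.log
            (((Measure.map (fun ω => X ω + X' ω) ℙ).rnDeriv volume x).toReal))
          (Measure.map (fun ω => X ω + X' ω) ℙ) ∧
        C < diffEnt1 (Measure.map (fun ω => X ω + X' ω) ℙ) := by
  set N : ℕ := max 3 (Nat.ceil (2 * Real.exp C) + 1) with hNdef
  have hN3 : 3 ≤ N := le_max_left _ _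
  have hN1 : 1 ≤ N := by omega
  have hNpos : (0:ℝ) < N := by positivity
  have hNC : 2 * Real.exp C < (N : ℝ) := by
    have h1 : 2 * Real.exp C ≤ (Nat.ceil (2 * Real.exp C) : ℝ) := Nat.le_ceil _
    have h2 : (Nat.ceil (2 * Real.exp C) + 1 : ℕ) ≤ N := le_max_right _ _
    have h2' : ((Nat.ceil (2 * Real.exp C) + 1 : ℕ) : ℝ) ≤ N := by exact_mod_cast h2
    push_cast at h2'
    linarith
  have h2Npos : (0:ℝ) < 2 / N := by positivity
  have h2Nle : (2:ℝ) / N ≤ 1 := by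
    rw [div_le_one hNpos]
    have : (3:ℝ) ≤ N := by exact_mod_cast hN3
    linarith
  refine ⟨(stmt13S N).indicator (fun _ => (1:ℝ)), ?_, ?_, ?_, ?_, ?_⟩
  · exact fun x => Set.indicator_nonneg (fun _ _ => zero_le_one) x
  · exact measurable_const.indicator (stmt13S_meas N)
  · rw [integral_indicator_const (1:ℝ) (stmt13S_meas N), measureReal_def, stmt13S_vol N hN1]
    simp
  · have hz : ∀ x : ℝ, (stmt13S N).indicator (fun _ => (1:ℝ)) x
        * Real.log ((stmt13S N).indicator (fun _ => (1:ℝ)) x) = 0 := by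
      intro x
      by_cases h : x ∈ stmt13S N <;> simp [Set.indicator_apply, h]
    simp only [hz, integral_zero, neg_zero]
  · intro Ω _ hprob X X' hX hX' hindep hmX hmX'
    have hfE : (fun x => ENNReal.ofReal ((stmt13S N).indicator (fun _ => (1:ℝ)) x))
        = (stmt13S N).indicator (1 : ℝ → ENNReal) := by
      funext x
      by_cases h : x ∈ stmt13S N <;> simp [Set.indicator_apply, h]
    have hindmeas : Measurable ((stmt13S N).indicator (1 : ℝ → ENNReal)) :=
      measurable_one.indicator (stmt13S_meas N)
    have hG : Measurable (stmt13G N) := stmt13_conv_meas hindmeas hindmeas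
    have hpair := (indepFun_iff_map_prod_eq_prod_map_map hX.aemeasurable
      hX'.aemeasurable).1 hindep
    have hsum : Measure.map (fun ω => X ω + X' ω) ℙ = volume.withDensity (stmt13G N) := by
      have hcomp : (fun ω => X ω + X' ω)
          = (fun p : ℝ × ℝ => p.1 + p.2) ∘ (fun ω => (X ω, X' ω)) := rfl
      rw [hcomp, ← Measure.map_map measurable_add (hX.prodMk hX'), hpair, hmX, hmX', hfE,
        stmt13_map_add_prod hindmeas hindmeas]
      rfl
    haveI : IsProbabilityMeasure (Measure.map (fun ω => X ω + X' ω) ℙ) :=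
      Measure.isProbabilityMeasure_map ((hX.add hX').aemeasurable)
    have hrn : (Measure.map (fun ω => X ω + X' ω) ℙ).rnDeriv volume =ᵐ[volume] stmt13G N := by
      rw [hsum]; exact Measure.rnDeriv_withDensity volume hG
    have hac : Measure.map (fun ω => X ω + X' ω) ℙ ≪ volume := by
      rw [hsum]; exact withDensity_absolutelyContinuous _ _
    have hrnμ : (Measure.map (fun ω => X ω + X' ω) ℙ).rnDeriv volume
        =ᵐ[Measure.map (fun ω => X ω + X' ω) ℙ] stmt13G N := hac.ae_eq hrn
    have hLeq : (fun x => Real.log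
          (((Measure.map (fun ω => X ω + X' ω) ℙ).rnDeriv volume x).toReal))
        =ᵐ[Measure.map (fun ω => X ω + X' ω) ℙ]
          (fun x => Real.log ((stmt13G N x).toReal)) :=
      hrnμ.mono fun x hx => by dsimp only; rw [hx]
    have hGltop : ∀ x, stmt13G N x < ⊤ :=
      fun x => lt_of_le_of_lt (stmt13G_le hN3 x) ENNReal.ofReal_lt_top
    have htoReal_le : ∀ x, (stmt13G N x).toReal ≤ 2 / N :=
      fun x => ENNReal.toReal_le_of_le_ofReal (le_of_lt h2Npos) (stmt13G_le hN3 x)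
    -- a.e. positivity of the density w.r.t. the pushforward measure
    have hpos : ∀ᵐ x ∂(Measure.map (fun ω => X ω + X' ω) ℙ), stmt13G N x ≠ 0 := by
      rw [ae_iff]
      have hset : {x : ℝ | ¬stmt13G N x ≠ 0} = stmt13G N ⁻¹' {0} := by
        ext x; simp
      rw [hset, hsum, withDensity_apply _ (hG (measurableSet_singleton 0))]
      rw [setLIntegral_congr_fun (hG (measurableSet_singleton 0))
        (fun x hx => (hx : stmt13G N x = 0))]
      simp
    -- integrability
    have hLmeas : Measurable fun x => Real.log ((stmt13G N x).toReal) :=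
      Real.measurable_log.comp hG.ennreal_toReal
    have hIntVol : Integrable
        (fun x => Real.log ((stmt13G N x).toReal) * (stmt13G N x).toReal) volume := by
      apply Integrable.mono'
        (μ := volume)
        (g := (Set.Icc (0:ℝ) (2^(N+1))).indicator (fun _ => (1:ℝ)))
      · exact (integrable_indicator_iff measurableSet_Icc).2
          (integrableOn_const measure_Icc_lt_top.ne)
      · exact (hLmeas.mul hG.ennreal_toReal).aestronglyMeasurable
      · apply ae_of_all
        intro x
        by_cases hx : stmt13G N x = 0
        · simp only [hx, ENNReal.toReal_zero, mul_zero, norm_zero]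
          exact Set.indicator_nonneg (fun _ _ => zero_le_one) x
        · have hmem := stmt13G_support hN3 hx
          have hgpos : 0 < (stmt13G N x).toReal := ENNReal.toReal_pos hx (hGltop x).ne
          have hgle1 : (stmt13G N x).toReal ≤ 1 := le_trans (htoReal_le x) h2Nle
          have habs := Real.abs_log_mul_self_lt _ hgpos hgle1
          rw [Set.indicator_of_mem hmem, Real.norm_eq_abs]
          exact le_of_lt habs
    have hIntL : Integrable (fun x => Real.log ((stmt13G N x).toReal))
        (Measure.map (fun ω => X ω + X' ω) ℙ) := by
      rw [hsum, integrable_withDensity_iff hG (ae_of_all _ fun x => hGltop x)]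
      exact hIntVol
    have hInt1 : Integrable
        (fun x => Real.log
          (((Measure.map (fun ω => X ω + X' ω) ℙ).rnDeriv volume x).toReal))
        (Measure.map (fun ω => X ω + X' ω) ℙ) := hIntL.congr hLeq.symm
    refine ⟨hInt1, ?_⟩
    -- entropy lower bound
    have hub : ∀ᵐ x ∂(Measure.map (fun ω => X ω + X' ω) ℙ),
        Real.log ((stmt13G N x).toReal) ≤ Real.log (2 / N) := by
      filter_upwards [hpos] with x hx
      exact (Real.log_le_log_iff (ENNReal.toReal_pos hx (hGltop x).ne) h2Npos).2
        (htoReal_le x)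
    have hint_le : ∫ x, Real.log ((stmt13G N x).toReal)
        ∂(Measure.map (fun ω => X ω + X' ω) ℙ) ≤ Real.log (2 / N) := by
      have := integral_mono_ae hIntL (integrable_const (Real.log (2 / N))) hub
      simpa using this
    have hent_eq : ∫ x, Real.log
          (((Measure.map (fun ω => X ω + X' ω) ℙ).rnDeriv volume x).toReal)
          ∂(Measure.map (fun ω => X ω + X' ω) ℙ)
        = ∫ x, Real.log ((stmt13G N x).toReal)
          ∂(Measure.map (fun ω => X ω + X' ω) ℙ) := integral_congr_ae hLeq
    have hlogC : Real.log (2 / N) < -C := by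
      rw [Real.log_lt_iff_lt_exp h2Npos, div_lt_iff₀ hNpos]
      have h1 : Real.exp (-C) * Real.exp C = 1 := by
        rw [← Real.exp_add]; simp
      nlinarith [Real.exp_pos (-C), Real.exp_pos C]
    rw [diffEnt1, hent_eq]
    linarith
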